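/- Let 𝒜(z) = Σ_{ℓ=-r}^p a_ℓ z^ℓ with real coefficients, 𝒜(1)=0, 𝒜'(1)=a. For any ε ∈ (0,π/4], the map ω ↦ Im 𝒜(cos ε + iω) on [−sin ε, sin ε] has derivative Re 𝒜'(cos ε + iω). Consequently, if ε is small enough and a > 0 (resp. a < 0), this map is strictly increasing (resp. strictly decreasing) on [−sin ε, sin ε], and hence 𝒜(cos ε + iω) ∉ ℝ for every ω with 0 < |ω| ≤ sin ε. -/

import Mathlib

open Complex Real Set

lemma aux_hasDerivAt (S : Finset ℤ) (a : ℤ → ℝ) (c : ℝ) (hc : c ≠ 0) (ω : ℝ) :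
    HasDerivAt (fun ω : ℝ => (∑ ℓ ∈ S, (a ℓ : ℂ) * ((c : ℂ) + ω * Complex.I) ^ ℓ).im)
      ((∑ ℓ ∈ S, (ℓ : ℂ) * (a ℓ : ℂ) * ((c : ℂ) + ω * Complex.I) ^ (ℓ - 1)).re) ω := by
  set z : ℂ := (c : ℂ) + ω * Complex.I with hzdef
  have hz : z ≠ 0 := by
    intro h
    have : z.re = c := by simp [hzdef]
    rw [h] at this; simp at this; exact hc this.symm
  have hline : HasDerivAt (fun ω : ℝ => (c : ℂ) + ω * Complex.I) Complex.I ω := by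
    simpa using (((hasDerivAt_id ω).ofReal_comp).mul_const Complex.I).const_add (c : ℂ)
  have hsum : HasDerivAt (fun ω : ℝ => ∑ ℓ ∈ S, (a ℓ : ℂ) * ((c : ℂ) + ω * Complex.I) ^ ℓ)
      (∑ ℓ ∈ S, (a ℓ : ℂ) * ((ℓ : ℂ) * z ^ (ℓ - 1) * Complex.I)) ω := by
    apply HasDerivAt.fun_sum
    intro ℓ _
    exact ((hasDerivAt_zpow ℓ z (Or.inl hz)).comp ω hline).const_mul _
  have him : HasDerivAt (fun ω : ℝ => (∑ ℓ ∈ S, (a ℓ : ℂ) * ((c : ℂ) + ω * Complex.I) ^ ℓ).im)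
      (Complex.imCLM (∑ ℓ ∈ S, (a ℓ : ℂ) * ((ℓ : ℂ) * z ^ (ℓ - 1) * Complex.I))) ω :=
    Complex.imCLM.hasFDerivAt.comp_hasDerivAt ω hsum
  convert him using 1
  simp only [imCLM_apply, Complex.im_sum, Complex.re_sum]
  apply Finset.sum_congr rfl
  intro ℓ _
  simp [Complex.mul_im, Complex.mul_re]
  ring

lemma aux_im_zero (S : Finset ℤ) (a : ℤ → ℝ) (c : ℝ) :
    (∑ ℓ ∈ S, (a ℓ : ℂ) * ((c : ℂ) + (0 : ℝ) * Complex.I) ^ ℓ).im = 0 := by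
  simp only [Complex.ofReal_zero, zero_mul, add_zero, Complex.im_sum]
  apply Finset.sum_eq_zero
  intro ℓ _
  rw [← Complex.ofReal_zpow, ← Complex.ofReal_mul, Complex.ofReal_im]

theorem stmt4 (r p : ℕ) (a : ℤ → ℝ) (aa : ℝ)
    (hA1 : ∑ ℓ ∈ Finset.Icc (-(r : ℤ)) (p : ℤ), a ℓ = 0)
    (hA'1 : ∑ ℓ ∈ Finset.Icc (-(r : ℤ)) (p : ℤ), (ℓ : ℝ) * a ℓ = aa)
    (haa : aa ≠ 0) :
    (∀ ε : ℝ, ε ∈ Set.Ioc 0 (Real.pi / 4) → ∀ ω : ℝ, ω ∈ Set.Icc (-Real.sin ε) (Real.sin ε) →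
      HasDerivAt
        (fun ω : ℝ => (∑ ℓ ∈ Finset.Icc (-(r : ℤ)) (p : ℤ),
          (a ℓ : ℂ) * ((Real.cos ε : ℂ) + ω * Complex.I) ^ ℓ).im)
        (∑ ℓ ∈ Finset.Icc (-(r : ℤ)) (p : ℤ),
          (ℓ : ℂ) * (a ℓ : ℂ) * ((Real.cos ε : ℂ) + ω * Complex.I) ^ (ℓ - 1)).re ω) ∧
    (∃ ε₀ > 0, ∀ ε : ℝ, 0 < ε → ε ≤ min ε₀ (Real.pi / 4) →
      ((0 < aa → StrictMonoOn
          (fun ω : ℝ => (∑ ℓ ∈ Finset.Icc (-(r : ℤ)) (p : ℤ),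
            (a ℓ : ℂ) * ((Real.cos ε : ℂ) + ω * Complex.I) ^ ℓ).im)
          (Set.Icc (-Real.sin ε) (Real.sin ε))) ∧
       (aa < 0 → StrictAntiOn
          (fun ω : ℝ => (∑ ℓ ∈ Finset.Icc (-(r : ℤ)) (p : ℤ),
            (a ℓ : ℂ) * ((Real.cos ε : ℂ) + ω * Complex.I) ^ ℓ).im)
          (Set.Icc (-Real.sin ε) (Real.sin ε))) ∧
       (∀ ω : ℝ, 0 < |ω| → |ω| ≤ Real.sin ε →
          (∑ ℓ ∈ Finset.Icc (-(r : ℤ)) (p : ℤ),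
            (a ℓ : ℂ) * ((Real.cos ε : ℂ) + ω * Complex.I) ^ ℓ).im ≠ 0))) := by
  set S := Finset.Icc (-(r : ℤ)) (p : ℤ) with hS
  -- the derivative function
  set φ : ℂ → ℝ := fun z => (∑ ℓ ∈ S, (ℓ : ℂ) * (a ℓ : ℂ) * z ^ (ℓ - 1)).re with hφ
  constructor
  · intro ε hε ω _
    have hc : Real.cos ε ≠ 0 := by
      have : 0 < Real.cos ε := Real.cos_pos_of_mem_Ioo
        ⟨by linarith [hε.1, Real.pi_pos], by linarith [hε.2, Real.pi_pos]⟩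
      exact this.ne'
    exact aux_hasDerivAt S a (Real.cos ε) hc ω
  · -- continuity of φ at 1
    have hφcont : ContinuousAt φ 1 := by
      apply Complex.continuous_re.continuousAt.comp
      exact tendsto_finset_sum _ fun ℓ _ =>
        (continuousAt_const.mul (continuousAt_zpow₀ (1 : ℂ) (ℓ - 1) (Or.inl one_ne_zero)))
    have hφ1 : φ 1 = aa := by
      rw [hφ]
      simp only [one_zpow, mul_one, Complex.re_sum]
      rw [← hA'1]
      apply Finset.sum_congr rfl
      intro ℓ _
      rw [← Complex.ofReal_intCast, ← Complex.ofReal_mul]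
      simp
    have habs : 0 < |aa| := abs_pos.2 haa
    obtain ⟨δ, hδpos, hδ⟩ := Metric.continuousAt_iff.mp hφcont |aa| habs
    refine ⟨δ / 3, by linarith, ?_⟩
    intro ε hε hεle
    have hε₀ : ε ≤ δ / 3 := le_trans hεle (min_le_left _ _)
    have hεπ : ε ≤ Real.pi / 4 := le_trans hεle (min_le_right _ _)
    have hεπ2 : ε < Real.pi / 2 := by linarith [Real.pi_pos]
    have hcpos : 0 < Real.cos ε := Real.cos_pos_of_mem_Ioo ⟨by linarith [Real.pi_pos], hεπ2⟩
    have hsinpos : 0 < Real.sin ε := Real.sin_pos_of_pos_of_lt_pi hε (by linarith [Real.pi_pos])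
    -- every point of the chord is δ-close to 1
    have hkey : ∀ x : ℝ, x ∈ Set.Icc (-Real.sin ε) (Real.sin ε) →
        dist ((Real.cos ε : ℂ) + x * Complex.I) 1 < δ := by
      intro x hx
      have hxabs : |x| ≤ Real.sin ε := abs_le.mpr ⟨hx.1, hx.2⟩
      have h1 : dist ((Real.cos ε : ℂ) + x * Complex.I) 1
          = ‖(Real.cos ε : ℂ) + x * Complex.I - 1‖ := by
        rw [Complex.dist_eq]
      rw [h1]
      have h2 : ‖(Real.cos ε : ℂ) + x * Complex.I - 1‖
          ≤ |Real.cos ε - 1| + |x| := by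
        have := Complex.norm_le_abs_re_add_abs_im ((Real.cos ε : ℂ) + x * Complex.I - 1)
        simpa [-Complex.ofReal_cos] using this
      have h3 : |Real.cos ε - 1| = 1 - Real.cos ε := by
        rw [abs_sub_comm]; exact abs_of_nonneg (by linarith [Real.cos_le_one ε])
      have h4 : 1 - Real.cos ε ≤ ε ^ 2 / 2 := by
        linarith [Real.one_sub_sq_div_two_le_cos (x := ε)]
      have h5 : ε ^ 2 / 2 ≤ ε := by nlinarith [Real.pi_le_four]
      have h6 : Real.sin ε ≤ ε := Real.sin_le hε.le
      have h7 : 2 * ε < δ := by linarith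
      calc ‖(Real.cos ε : ℂ) + x * Complex.I - 1‖
          ≤ |Real.cos ε - 1| + |x| := h2
        _ ≤ ε + ε := by rw [h3]; linarith
        _ < δ := by linarith
    -- sign of φ on the chord
    have hsign : ∀ x : ℝ, x ∈ Set.Icc (-Real.sin ε) (Real.sin ε) →
        |φ ((Real.cos ε : ℂ) + x * Complex.I) - aa| < |aa| := by
      intro x hx
      have := hδ (hkey x hx)
      rwa [Real.dist_eq, hφ1] at this
    -- the function and its derivative
    set f : ℝ → ℝ := fun ω : ℝ => (∑ ℓ ∈ S,
      (a ℓ : ℂ) * ((Real.cos ε : ℂ) + ω * Complex.I) ^ ℓ).im with hf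
    have hder : ∀ x : ℝ, HasDerivAt f (φ ((Real.cos ε : ℂ) + x * Complex.I)) x :=
      fun x => aux_hasDerivAt S a (Real.cos ε) hcpos.ne' x
    have hfc : Continuous f := by
      rw [continuous_iff_continuousAt]; exact fun x => (hder x).continuousAt
    have hderiv_eq : ∀ x : ℝ, deriv f x = φ ((Real.cos ε : ℂ) + x * Complex.I) :=
      fun x => (hder x).deriv
    have hmono : 0 < aa → StrictMonoOn f (Set.Icc (-Real.sin ε) (Real.sin ε)) := by
      intro hpos
      apply strictMonoOn_of_deriv_pos (convex_Icc _ _) hfc.continuousOn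
      intro x hx
      rw [interior_Icc] at hx
      rw [hderiv_eq]
      have := hsign x (Ioo_subset_Icc_self hx)
      rw [abs_of_pos hpos] at this
      have := abs_lt.mp this
      linarith [this.1]
    have hanti : aa < 0 → StrictAntiOn f (Set.Icc (-Real.sin ε) (Real.sin ε)) := by
      intro hneg
      apply strictAntiOn_of_deriv_neg (convex_Icc _ _) hfc.continuousOn
      intro x hx
      rw [interior_Icc] at hx
      rw [hderiv_eq]
      have := hsign x (Ioo_subset_Icc_self hx)
      rw [abs_of_neg hneg] at this
      have := abs_lt.mp this
      linarith [this.2]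
    refine ⟨hmono, hanti, ?_⟩
    intro ω hω0 hωle
    have hωmem : ω ∈ Set.Icc (-Real.sin ε) (Real.sin ε) := by
      have := abs_le.mp hωle; exact ⟨this.1, this.2⟩
    have h0mem : (0 : ℝ) ∈ Set.Icc (-Real.sin ε) (Real.sin ε) :=
      ⟨by linarith, hsinpos.le⟩
    have hne : ω ≠ 0 := by
      intro h; rw [h] at hω0; simp at hω0
    have hf0 : f 0 = 0 := aux_im_zero S a (Real.cos ε)
    rcases haa.lt_or_gt with hneg | hpos
    · have := ((hanti hneg).injOn).ne hωmem h0mem hne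
      rw [hf0] at this
      exact this
    · have := ((hmono hpos).injOn).ne hωmem h0mem hne
      rw [hf0] at this
      exact this
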